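/- Let Υ be a tree and let ‖·‖ be a strictly convex norm on C₀(Υ) equivalent to the supremum norm. Then the associated function μ : Υ → ℝ is constant on no ever-branching subset of Υ. -/

import Mathlib

open Filter Topology Set

noncomputable section

/-- `n` is a norm on `X` equivalent to the given norm. -/
def IsEquivNorm {X : Type*} [SeminormedAddCommGroup X] [Module ℝ X] (n : X → ℝ) : Prop :=
  (∀ (a : ℝ) (x : X), n (a • x) = |a| * n x) ∧
  (∀ x y : X, n (x + y) ≤ n x + n y) ∧
  ∃ c C : ℝ, 0 < c ∧ ∀ x : X, c * ‖x‖ ≤ n x ∧ n x ≤ C * ‖x‖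

/-- Local uniform convexity of a norm-like function `n`. -/
def IsLUR {X : Type*} [AddCommGroup X] (n : X → ℝ) : Prop :=
  ∀ (x : X) (xs : ℕ → X),
    Tendsto (fun k => n (xs k)) atTop (𝓝 (n x)) →
    Tendsto (fun k => n (x + xs k)) atTop (𝓝 (2 * n x)) →
    Tendsto (fun k => n (x - xs k)) atTop (𝓝 0)

/-- Midpoint local uniform convexity. -/
def IsMLUR {X : Type*} [AddCommGroup X] (n : X → ℝ) : Prop :=
  ∀ (x : X) (hs : ℕ → X),
    Tendsto (fun k => n (x + hs k)) atTop (𝓝 (n x)) →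
    Tendsto (fun k => n (x - hs k)) atTop (𝓝 (n x)) →
    Tendsto (fun k => n (hs k)) atTop (𝓝 0)

/-- Strict convexity of a norm-like function `n`. -/
def IsStrictConvexNorm {X : Type*} [AddCommGroup X] [Module ℝ X] (n : X → ℝ) : Prop :=
  ∀ x y : X, n x = n y → n ((2⁻¹ : ℝ) • (x + y)) = n x → x = y

/-- The dual norm of `n` on the continuous dual of `X`. -/
def dualNorm {X : Type*} [SeminormedAddCommGroup X] [NormedSpace ℝ X] (n : X → ℝ)
    (ξ : X →L[ℝ] ℝ) : ℝ :=
  sSup ((fun x => ξ x) '' {x : X | n x ≤ 1})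

/-- Weak local uniform convexity. -/
def IsWLUR {X : Type*} [SeminormedAddCommGroup X] [NormedSpace ℝ X] (n : X → ℝ) : Prop :=
  ∀ (x : X) (xs : ℕ → X),
    Tendsto (fun k => n (xs k)) atTop (𝓝 (n x)) →
    Tendsto (fun k => n (x + xs k)) atTop (𝓝 (2 * n x)) →
    ∀ ξ : X →L[ℝ] ℝ, Tendsto (fun k => ξ (xs k)) atTop (𝓝 (ξ x))

/-- The weak topology of a normed space: the coarsest topology making all continuous
linear functionals continuous. -/
def weakTopology (X : Type*) [SeminormedAddCommGroup X] [NormedSpace ℝ X] :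
    TopologicalSpace X :=
  ⨅ ξ : X →L[ℝ] ℝ, TopologicalSpace.induced (fun x => ξ x) inferInstance

/-- The Kadec property: weak and norm topologies coincide on the unit sphere of `n`. -/
def IsKadec {X : Type*} [SeminormedAddCommGroup X] [NormedSpace ℝ X] (n : X → ℝ) : Prop :=
  TopologicalSpace.induced (Subtype.val : {x : X // n x = 1} → X) (weakTopology X) =
    TopologicalSpace.induced (Subtype.val : {x : X // n x = 1} → X) inferInstance

/-- A tree: every set of strict predecessors is well-ordered. -/
def IsTree (Υ : Type*) [PartialOrder Υ] : Prop :=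
  ∀ t : Υ, IsWellOrder {s : Υ // s < t} (· < ·)

/-- A Hausdorff tree: points whose predecessor set is nonempty with no greatest element
are determined by their sets of strict predecessors. -/
def IsHausdorffTree (Υ : Type*) [PartialOrder Υ] : Prop :=
  ∀ t t' : Υ, (Set.Iio t).Nonempty → (∀ s, s < t → ∃ s', s < s' ∧ s' < t) →
    Set.Iio t = Set.Iio t' → t = t'

/-- The locally compact topology of a tree: the coarsest topology in which every
interval `(0, t]` is both open and closed. -/
def treeTopology (Υ : Type*) [PartialOrder Υ] : TopologicalSpace Υ :=
  TopologicalSpace.generateFrom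
    ({S | ∃ t : Υ, S = Set.Iic t} ∪ {S | ∃ t : Υ, S = (Set.Iic t)ᶜ})

/-- The tree `Υ` carrying its locally compact topology. -/
def TreeSpace (Υ : Type*) [PartialOrder Υ] : Type _ := Υ

instance (Υ : Type*) [PartialOrder Υ] : TopologicalSpace (TreeSpace Υ) := treeTopology Υ

/-- `C₀(Υ)`: continuous real functions on the tree vanishing at infinity, with sup norm. -/
abbrev C0Tree (Υ : Type*) [PartialOrder Υ] := ZeroAtInftyContinuousMap (TreeSpace Υ) ℝ

/-- Identification of the tree and its topological incarnation. -/
def toTree {Υ : Type*} [PartialOrder Υ] (t : Υ) : TreeSpace Υ := t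

/-- `t` is a good point for `ρ`: off a finite set of immediate successors of `t`,
`ρ` is bounded away above `ρ t`.  A bad point is a point that is not good. -/
def GoodPoint {Υ : Type*} [PartialOrder Υ] (ρ : Υ → ℝ) (t : Υ) : Prop :=
  ∃ (F : Finset Υ) (c : ℝ), ρ t < c ∧ ∀ u : Υ, t ⋖ u → u ∉ F → c ≤ ρ u

/-- A subset `Γ` of a tree is ever-branching if no `t ∈ Γ` has totally ordered
set of successors within `Γ`. -/
def EverBranching {Υ : Type*} [PartialOrder Υ] (Γ : Set Υ) : Prop :=
  ∀ t ∈ Γ, ∃ u ∈ Γ, ∃ v ∈ Γ, t ≤ u ∧ t ≤ v ∧ ¬ u ≤ v ∧ ¬ v ≤ u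

/-- `ρ` is constant on no (nonempty) ever-branching subset. -/
def ConstOnNoEverBranching {Υ : Type*} [PartialOrder Υ] (ρ : Υ → ℝ) : Prop :=
  ∀ Γ : Set Υ, Γ.Nonempty → EverBranching Γ → ¬ ∃ c : ℝ, ∀ t ∈ Γ, ρ t = c

/-- The function `μ` associated with an equivalent norm `n` on `C₀(Υ)`:
`μ t` is the infimum of `n f` over all `f` of the form `𝟙_(0,t] + f'` with
`f'` supported in `(t, ∞)`. -/
def muFn {Υ : Type*} [PartialOrder Υ] (n : C0Tree Υ → ℝ) (t : Υ) : ℝ :=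
  sInf (n '' {f : C0Tree Υ |
    (∀ s : Υ, s ≤ t → f (toTree s) = 1) ∧
    ∀ s : Υ, ¬ s ≤ t → ¬ t < s → f (toTree s) = 0})

/-- A copy of `α` carrying the discrete topology. -/
def DiscreteOf (α : Type*) : Type _ := α

instance (α : Type*) : TopologicalSpace (DiscreteOf α) := ⊥
instance (α : Type*) : DiscreteTopology (DiscreteOf α) := ⟨rfl⟩

/-- The space `c₀(α)` with its sup norm. -/
abbrev c0 (α : Type*) := ZeroAtInftyContinuousMap (DiscreteOf α) ℝ

/-- Identification of `α` with its discrete copy. -/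
def toDisc {α : Type*} (a : α) : DiscreteOf α := a

end

noncomputable section AuxiliaryForStatement5

open Filter Topology Set

variable {Υ : Type*} [PartialOrder Υ]

/-- Any two elements below a common element of a tree are comparable. -/
private lemma tree_comp (htree : IsTree Υ) {a b c : Υ} (ha : a ≤ c) (hb : b ≤ c) :
    a ≤ b ∨ b ≤ a := by
  rcases eq_or_lt_of_le ha with rfl | ha'
  · exact Or.inr hb
  rcases eq_or_lt_of_le hb with rfl | hb'
  · exact Or.inl ha'.le
  haveI := htree c
  rcases @trichotomous {s : Υ // s < c} (· < ·) _ ⟨a, ha'⟩ ⟨b, hb'⟩ with h | h | h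
  · exact Or.inl (le_of_lt (Subtype.mk_lt_mk.mp h))
  · exact Or.inl (le_of_eq (congrArg Subtype.val h))
  · exact Or.inr (le_of_lt (Subtype.mk_lt_mk.mp h))

/-- A nonempty subset of `(0, t]` (described by a predicate) has a minimum. -/
private lemma tree_min (htree : IsTree Υ) (t : Υ) (P : Υ → Prop)
    (hne : ∃ s, s ≤ t ∧ P s) :
    ∃ m, m ≤ t ∧ P m ∧ ∀ s, s ≤ t → P s → m ≤ s := by
  haveI := htree t
  by_cases hlt : ∃ x : {s : Υ // s < t}, P x.1
  · obtain ⟨x, hx⟩ := hlt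
    have hwf : WellFounded ((· < ·) : {s : Υ // s < t} → {s : Υ // s < t} → Prop) :=
      IsWellFounded.wf
    set Q : Set {s : Υ // s < t} := {y | P y.1} with hQ
    have hQne : Q.Nonempty := ⟨x, hx⟩
    set m := hwf.min Q hQne with hm
    have hmQ : m ∈ Q := hwf.min_mem Q hQne
    refine ⟨m.1, m.2.le, hmQ, ?_⟩
    intro s hs hPs
    rcases eq_or_lt_of_le hs with rfl | hs'
    · exact m.2.le
    · have hnot := hwf.not_lt_min Q (show (⟨s, hs'⟩ : {s : Υ // s < t}) ∈ Q from hPs)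
      rcases tree_comp htree m.2.le hs'.le with h | h
      · exact h
      · rcases eq_or_lt_of_le h with h' | h'
        · exact le_of_eq h'.symm
        · exact absurd (Subtype.mk_lt_mk.mpr h') hnot
  · obtain ⟨s, hst, hPs⟩ := hne
    rcases eq_or_lt_of_le hst with rfl | h
    · refine ⟨s, le_rfl, hPs, ?_⟩
      intro s' hs' hP'
      rcases eq_or_lt_of_le hs' with rfl | h'
      · exact le_rfl
      · exact absurd ⟨⟨s', h'⟩, hP'⟩ hlt
    · exact absurd ⟨⟨s, h⟩, hPs⟩ hlt

/-- The underlying point of the tree space. -/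
private def untree {Υ : Type*} [PartialOrder Υ] (x : TreeSpace Υ) : Υ := x

/-- The interval `(0, t]` viewed as a subset of the tree space. -/
private def IicT (t : Υ) : Set (TreeSpace Υ) := (Set.Iic t : Set Υ)

private lemma mem_IicT {t s : Υ} (h : s ≤ t) : toTree s ∈ IicT t := h

private lemma IicT_open (t : Υ) : IsOpen (IicT t) :=
  TopologicalSpace.GenerateOpen.basic _ (Or.inl ⟨t, rfl⟩)

private lemma IicT_compl_open (t : Υ) : IsOpen ((IicT t)ᶜ) :=
  TopologicalSpace.GenerateOpen.basic _ (Or.inr ⟨t, rfl⟩)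

/-- In a Hausdorff tree, every interval `(0, t]` is compact in the tree topology. -/
private lemma tree_compact (htree : IsTree Υ) (hH : IsHausdorffTree Υ) (t : Υ) :
    IsCompact (IicT t) := by
  rw [isCompact_iff_ultrafilter_le_nhds]
  intro F hF
  have hFt : (Set.Iic t : Set Υ) ∈ F := le_principal_iff.mp hF
  obtain ⟨x₀, hx₀t, hx₀F, hx₀min⟩ :=
    tree_min htree t (fun s => (Set.Iic s : Set Υ) ∈ F) ⟨t, le_rfl, hFt⟩
  refine ⟨toTree x₀, mem_IicT hx₀t, ?_⟩
  rw [le_nhds_iff]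
  intro s hxs hs
  have hgen : TopologicalSpace.GenerateOpen
      ({S : Set Υ | ∃ u : Υ, S = Set.Iic u} ∪ {S : Set Υ | ∃ u : Υ, S = (Set.Iic u)ᶜ})
      s := hs
  clear hs
  induction hgen with
  | @basic S hS =>
    rcases hS with ⟨u, rfl⟩ | ⟨u, rfl⟩
    · have hxu : x₀ ≤ u := hxs
      exact Filter.mem_of_superset hx₀F (fun y hy => le_trans hy hxu)
    · have hxu : ¬ x₀ ≤ u := hxs
      show (IicT u)ᶜ ∈ F
      rw [Ultrafilter.compl_mem_iff_notMem]
      intro hIu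
      have hD : (Set.Iic u ∩ Set.Iic t : Set Υ) ∈ F := Filter.inter_mem hIu hFt
      have hDne : (Set.Iic u ∩ Set.Iic t : Set Υ).Nonempty := F.nonempty_of_mem hD
      by_cases hmx : ∃ d ∈ (Set.Iic u ∩ Set.Iic t : Set Υ),
          ∀ s ∈ (Set.Iic u ∩ Set.Iic t : Set Υ), s ≤ d
      · obtain ⟨d, ⟨hdu, hdt⟩, hdmax⟩ := hmx
        have hEq : (Set.Iic d : Set Υ) = Set.Iic u ∩ Set.Iic t := by
          apply Set.Subset.antisymm
          · exact fun s hs => ⟨le_trans hs hdu, le_trans hs hdt⟩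
          · exact fun s hs => hdmax s hs
        have hdF : (Set.Iic d : Set Υ) ∈ F := by rw [hEq]; exact hD
        exact hxu (le_trans (hx₀min d hdt hdF) hdu)
      · obtain ⟨z, hzt, hzD, hzmin⟩ := tree_min htree t
          (fun s => s ∉ (Set.Iic u ∩ Set.Iic t : Set Υ))
          ⟨t, le_rfl, fun h => hxu (le_trans hx₀t h.1)⟩
        obtain ⟨z', hz'u, hz'D, hz'min⟩ := tree_min htree u
          (fun s => s ∉ (Set.Iic u ∩ Set.Iic t : Set Υ))
          ⟨u, le_rfl, fun h => hmx ⟨u, h, fun s hs => hs.1⟩⟩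
        push_neg at hmx
        have hIioz : Set.Iio z = (Set.Iic u ∩ Set.Iic t : Set Υ) := by
          ext s
          constructor
          · intro hs
            by_contra hsD
            exact absurd (hzmin s (le_trans (le_of_lt hs) hzt) hsD) hs.not_ge
          · intro hs
            rcases tree_comp htree hs.2 hzt with h | h
            · rcases eq_or_lt_of_le h with h' | h'
              · exact absurd (h' ▸ hs) hzD
              · exact h'
            · exact absurd ⟨le_trans h hs.1, le_trans h hs.2⟩ hzD
        have hIioz' : Set.Iio z' = (Set.Iic u ∩ Set.Iic t : Set Υ) := by
          ext s
          constructor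
          · intro hs
            by_contra hsD
            exact absurd (hz'min s (le_trans (le_of_lt hs) hz'u) hsD) hs.not_ge
          · intro hs
            rcases tree_comp htree hs.1 hz'u with h | h
            · rcases eq_or_lt_of_le h with h' | h'
              · exact absurd (h' ▸ hs) hz'D
              · exact h'
            · exact absurd ⟨le_trans h hs.1, le_trans h hs.2⟩ hz'D
        have hne' : (Set.Iio z).Nonempty := by rw [hIioz]; exact hDne
        have hnog : ∀ s, s < z → ∃ s', s < s' ∧ s' < z := by
          intro s hs
          have hsD : s ∈ (Set.Iic u ∩ Set.Iic t : Set Υ) := by rw [← hIioz]; exact hs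
          obtain ⟨s', hs'D, hs's⟩ := hmx s hsD
          have hlt : s < s' := by
            rcases tree_comp htree hsD.2 hs'D.2 with h | h
            · exact lt_of_le_of_ne h (by rintro rfl; exact hs's le_rfl)
            · exact absurd h hs's
          refine ⟨s', hlt, ?_⟩
          show s' ∈ Set.Iio z
          rw [hIioz]; exact hs'D
        have hzz' : z = z' := hH z z' hne' hnog (by rw [hIioz, hIioz'])
        exact hzD ⟨by rw [hzz']; exact hz'u, hzt⟩
  | univ => exact Filter.univ_mem
  | inter S T hS hT ihS ihT =>
    exact Filter.inter_mem (ihS hxs.1) (ihT hxs.2)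
  | sUnion S hS ih =>
    obtain ⟨T, hTS, hxT⟩ := hxs
    exact Filter.mem_of_superset (ih T hTS hxT) (Set.subset_sUnion_of_mem hTS)

/-- The indicator function of `(0, t]` belongs to `C₀(Υ)`. -/
private lemma exists_indicator (htree : IsTree Υ) (hH : IsHausdorffTree Υ) (t : Υ) :
    ∃ f : C0Tree Υ, (∀ s : Υ, s ≤ t → f (toTree s) = 1) ∧
      (∀ s : Υ, ¬ s ≤ t → f (toTree s) = 0) := by
  classical
  have hgcont : Continuous fun x : TreeSpace Υ => (if x ∈ IicT t then (1 : ℝ) else 0) := by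
    rw [continuous_iff_continuousAt]
    intro x
    by_cases hx : x ∈ IicT t
    · have h1 : (fun y : TreeSpace Υ => if y ∈ IicT t then (1 : ℝ) else 0) =ᶠ[𝓝 x]
          fun _ => (1 : ℝ) :=
        Filter.eventually_of_mem ((IicT_open t).mem_nhds hx) (fun y hy => if_pos hy)
      exact continuousAt_const.congr h1.symm
    · have h1 : (fun y : TreeSpace Υ => if y ∈ IicT t then (1 : ℝ) else 0) =ᶠ[𝓝 x]
          fun _ => (0 : ℝ) :=
        Filter.eventually_of_mem ((IicT_compl_open t).mem_nhds hx) (fun y hy => if_neg hy)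
      exact continuousAt_const.congr h1.symm
  have hgzero : Filter.Tendsto (fun x : TreeSpace Υ => (if x ∈ IicT t then (1 : ℝ) else 0))
      (Filter.cocompact (TreeSpace Υ)) (𝓝 0) := by
    rw [Filter.tendsto_def]
    intro V hV
    refine Filter.mem_cocompact.mpr ⟨IicT t, tree_compact htree hH t, fun x hx => ?_⟩
    simp only [Set.mem_preimage, if_neg hx]
    exact mem_of_mem_nhds hV
  refine ⟨⟨⟨fun x => if x ∈ IicT t then (1 : ℝ) else 0, hgcont⟩, hgzero⟩, ?_, ?_⟩
  · intro s hs
    exact if_pos (mem_IicT hs)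
  · intro s hs
    exact if_neg (fun h => hs h)

/-- Membership in the set of functions defining `muFn`. -/
private def Smem (t : Υ) (f : C0Tree Υ) : Prop :=
  (∀ s : Υ, s ≤ t → f (toTree s) = 1) ∧ ∀ s : Υ, ¬ s ≤ t → ¬ t < s → f (toTree s) = 0

private lemma muFn_eq (n : C0Tree Υ → ℝ) (t : Υ) :
    muFn n t = sInf (n '' {f | Smem t f}) := rfl

private lemma Smem_mono (htree : IsTree Υ) {t u : Υ} (htu : t ≤ u)
    {f : C0Tree Υ} (hf : Smem u f) : Smem t f := by
  constructor
  · exact fun s hs => hf.1 s (hs.trans htu)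
  · intro s hst hts
    apply hf.2 s
    · intro hsu
      rcases tree_comp htree hsu htu with h | h
      · exact hst h
      · rcases eq_or_lt_of_le h with h' | h'
        · exact hst (le_of_eq h'.symm)
        · exact hts h'
    · intro hus
      exact hts (lt_of_le_of_lt htu hus)

private lemma Smem_mid {t : Υ} {f g : C0Tree Υ}
    (hf : Smem t f) (hg : Smem t g) : Smem t ((2⁻¹ : ℝ) • (f + g)) := by
  have hval : ∀ x : TreeSpace Υ, ((2⁻¹ : ℝ) • (f + g)) x = 2⁻¹ * (f x + g x) := by
    intro x; simp
  constructor
  · intro s hs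
    rw [hval, hf.1 s hs, hg.1 s hs]; norm_num
  · intro s h1 h2
    rw [hval, hf.2 s h1 h2, hg.2 s h1 h2]; norm_num

private lemma eval_le_norm (f : C0Tree Υ) (x : TreeSpace Υ) : |f x| ≤ ‖f‖ := by
  have h := BoundedContinuousFunction.norm_coe_le_norm f.toBCF x
  rw [ZeroAtInftyContinuousMap.norm_toBCF_eq_norm] at h
  simpa using h

private lemma norm_le_of_forall (f : C0Tree Υ) {M : ℝ} (hM : 0 ≤ M)
    (h : ∀ x, |f x| ≤ M) : ‖f‖ ≤ M := by
  rw [← ZeroAtInftyContinuousMap.norm_toBCF_eq_norm]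
  refine (BoundedContinuousFunction.norm_le hM).mpr ?_
  intro x; simpa using h x

private lemma norm_add_disjoint {a b : C0Tree Υ}
    (h : ∀ x, a x = 0 ∨ b x = 0) : ‖a + b‖ ≤ max ‖a‖ ‖b‖ := by
  apply norm_le_of_forall _ (le_max_of_le_left (norm_nonneg a))
  intro x
  have hx : (a + b) x = a x + b x := by simp
  rw [hx]
  rcases h x with h0 | h0
  · rw [h0]; simpa using le_max_of_le_right (eval_le_norm b x)
  · rw [h0]; simpa using le_max_of_le_left (eval_le_norm a x)

private lemma half_smul_apply (f : C0Tree Υ) (x : TreeSpace Υ) :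
    ((2⁻¹ : ℝ) • f) x = 2⁻¹ * f x := by simp

private lemma norm_half_smul_le (w : C0Tree Υ) : ‖(2⁻¹ : ℝ) • w‖ ≤ 2⁻¹ * ‖w‖ := by
  apply norm_le_of_forall _ (by positivity)
  intro x
  rw [half_smul_apply, abs_mul]
  have h2 : |(2⁻¹ : ℝ)| = 2⁻¹ := by norm_num
  rw [h2]
  exact mul_le_mul_of_nonneg_left (eval_le_norm w x) (by norm_num)

private lemma half_smul_sub (u v : C0Tree Υ) :
    (2⁻¹ : ℝ) • u - (2⁻¹ : ℝ) • v = (2⁻¹ : ℝ) • (u - v) := by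
  ext x
  simp
  ring

private lemma tendsto_half_add {F G : ℕ → C0Tree Υ} {A B : C0Tree Υ}
    (hF : Filter.Tendsto F Filter.atTop (𝓝 A)) (hG : Filter.Tendsto G Filter.atTop (𝓝 B)) :
    Filter.Tendsto (fun j => (2⁻¹ : ℝ) • (F j + G j)) Filter.atTop
      (𝓝 ((2⁻¹ : ℝ) • (A + B))) := by
  rw [tendsto_iff_dist_tendsto_zero]
  have hb : ∀ j, dist ((2⁻¹ : ℝ) • (F j + G j)) ((2⁻¹ : ℝ) • (A + B)) ≤
      2⁻¹ * (dist (F j) A + dist (G j) B) := by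
    intro j
    rw [dist_eq_norm, half_smul_sub]
    refine (norm_half_smul_le _).trans ?_
    have hx : F j + G j - (A + B) = (F j - A) + (G j - B) := by abel
    rw [hx, dist_eq_norm, dist_eq_norm]
    have hadd := norm_add_le (F j - A) (G j - B)
    linarith
  have h0 : Filter.Tendsto (fun j => 2⁻¹ * (dist (F j) A + dist (G j) B))
      Filter.atTop (𝓝 (0 : ℝ)) := by
    have h1 : Filter.Tendsto (fun j => dist (F j) A + dist (G j) B) Filter.atTop
        (𝓝 ((0 : ℝ) + 0)) :=
      Filter.Tendsto.add (tendsto_iff_dist_tendsto_zero.mp hF)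
        (tendsto_iff_dist_tendsto_zero.mp hG)
    have h2 := h1.const_mul (2⁻¹ : ℝ)
    simpa using h2
  exact squeeze_zero (fun j => dist_nonneg) hb h0

private lemma Smem_diff_eq {t : Υ} {f g : C0Tree Υ}
    (hf : Smem t f) (hg : Smem t g) {s : Υ} (hs : ¬ t < s) :
    f (toTree s) = g (toTree s) := by
  by_cases h : s ≤ t
  · rw [hf.1 s h, hg.1 s h]
  · rw [hf.2 s h hs, hg.2 s h hs]

private lemma Smem_closed {t : Υ} {F : ℕ → C0Tree Υ} {L : C0Tree Υ}
    (hF : ∀ j, Smem t (F j)) (hFL : Filter.Tendsto F Filter.atTop (𝓝 L)) : Smem t L := by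
  have heval : ∀ x : TreeSpace Υ,
      Filter.Tendsto (fun j => F j x) Filter.atTop (𝓝 (L x)) := by
    intro x
    rw [tendsto_iff_dist_tendsto_zero]
    have h1 : ∀ j, dist (F j x) (L x) ≤ dist (F j) L := by
      intro j
      rw [Real.dist_eq, dist_eq_norm]
      have hsub : F j x - L x = (F j - L) x := by simp
      rw [hsub]
      exact eval_le_norm _ x
    have h2 : Filter.Tendsto (fun j => dist (F j) L) Filter.atTop (𝓝 0) :=
      tendsto_iff_dist_tendsto_zero.mp hFL
    exact squeeze_zero (fun j => dist_nonneg) h1 h2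
  constructor
  · intro s hs
    have h := heval (toTree s)
    have hconst : (fun j => F j (toTree s)) = fun _ => (1 : ℝ) :=
      funext fun j => (hF j).1 s hs
    rw [hconst] at h
    exact (tendsto_nhds_unique h tendsto_const_nhds)
  · intro s h1 h2
    have h := heval (toTree s)
    have hconst : (fun j => F j (toTree s)) = fun _ => (0 : ℝ) :=
      funext fun j => (hF j).2 s h1 h2
    rw [hconst] at h
    exact (tendsto_nhds_unique h tendsto_const_nhds)

end AuxiliaryForStatement5

/-- Proposition 3.4: if `C₀(Υ)` has an equivalent strictly convex norm, the associated
function `μ` is constant on no ever-branching subset. -/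
theorem statement5 {Υ : Type*} [PartialOrder Υ] (htree : IsTree Υ)
    (hH : IsHausdorffTree Υ)
    (n : C0Tree Υ → ℝ) (hn : IsEquivNorm n) (hsc : IsStrictConvexNorm n) :
    ConstOnNoEverBranching (muFn n) := by
  classical
  intro Γ hΓne hbr hcon
  obtain ⟨k, hk⟩ := hcon
  obtain ⟨hhom, htri, c, C, hc, hbd⟩ := hn
  obtain ⟨t₀, ht₀⟩ := hΓne
  -- basic facts about n
  have hn0 : ∀ x : C0Tree Υ, 0 ≤ n x := fun x =>
    le_trans (mul_nonneg hc.le (norm_nonneg x)) (hbd x).1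
  have hndiff : ∀ x y : C0Tree Υ, n x ≤ n y + C * ‖x - y‖ := by
    intro x y
    have h1 := htri y (x - y)
    have h2 : y + (x - y) = x := by abel
    rw [h2] at h1
    linarith [(hbd (x - y)).2]
  have hnten : ∀ (F : ℕ → C0Tree Υ) (L : C0Tree Υ),
      Filter.Tendsto F Filter.atTop (𝓝 L) →
      Filter.Tendsto (fun j => n (F j)) Filter.atTop (𝓝 (n L)) := by
    intro F L hFL
    rw [tendsto_iff_dist_tendsto_zero]
    have hb : ∀ j, dist (n (F j)) (n L) ≤ C * dist (F j) L := by
      intro j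
      have e1 : n (F j) ≤ n L + C * ‖F j - L‖ := hndiff _ _
      have e2 : n L ≤ n (F j) + C * ‖L - F j‖ := hndiff _ _
      have e3 : ‖L - F j‖ = ‖F j - L‖ := norm_sub_rev _ _
      rw [e3] at e2
      rw [Real.dist_eq, dist_eq_norm, abs_le]
      constructor <;> linarith
    have h2 : Filter.Tendsto (fun j => C * dist (F j) L) Filter.atTop (𝓝 0) := by
      have := (tendsto_iff_dist_tendsto_zero.mp hFL).const_mul C
      simpa using this
    exact squeeze_zero (fun j => dist_nonneg) hb h2
  -- branching choice
  choose bu hbu bv hbv hbul hbvl hbuv hbvu using hbr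
  -- the dyadic system of nodes
  let step : {x : Υ // x ∈ Γ} → Bool → {x : Υ // x ∈ Γ} := fun p b =>
    Bool.rec ⟨bv p.1 p.2, hbv p.1 p.2⟩ ⟨bu p.1 p.2, hbu p.1 p.2⟩ b
  let Nd : List Bool → {x : Υ // x ∈ Γ} := fun σ => σ.foldr (fun b p => step p b) ⟨t₀, ht₀⟩
  have hNd_cons : ∀ (b : Bool) (σ : List Bool), Nd (b :: σ) = step (Nd σ) b := fun _ _ => rfl
  have hstep_le : ∀ (p : {x : Υ // x ∈ Γ}) (b : Bool), p.1 ≤ (step p b).1 := by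
    intro p b
    cases b
    · exact hbvl p.1 p.2
    · exact hbul p.1 p.2
  have hsib : ∀ p : {x : Υ // x ∈ Γ},
      ¬ (step p true).1 ≤ (step p false).1 ∧ ¬ (step p false).1 ≤ (step p true).1 := by
    intro p
    exact ⟨hbuv p.1 p.2, hbvu p.1 p.2⟩
  have hNle : ∀ (b : Bool) (σ : List Bool), (Nd σ).1 ≤ (Nd (b :: σ)).1 := fun b σ =>
    hstep_le (Nd σ) b
  -- nonemptiness of the admissible sets, value of the infimum
  have hSind : ∀ t : Υ, ∃ f : C0Tree Υ, Smem t f := by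
    intro t
    obtain ⟨f, h1, h2⟩ := exists_indicator htree hH t
    exact ⟨f, h1, fun s hs _ => h2 s hs⟩
  have hbdd : ∀ t : Υ, BddBelow (n '' {f | Smem t f}) := by
    intro t
    refine ⟨0, ?_⟩
    rintro y ⟨f, -, rfl⟩
    exact hn0 f
  have hkmem : ∀ t, t ∈ Γ → sInf (n '' {f | Smem t f}) = k := by
    intro t ht
    have := hk t ht
    rwa [muFn_eq] at this
  have hklb : ∀ t, t ∈ Γ → ∀ f : C0Tree Υ, Smem t f → k ≤ n f := by
    intro t ht f hf
    rw [← hkmem t ht]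
    exact csInf_le (hbdd t) ⟨f, hf, rfl⟩
  have hkc : c ≤ k := by
    rw [← hkmem t₀ ht₀]
    have hSne : ({f : C0Tree Υ | Smem t₀ f}).Nonempty := hSind t₀
    apply le_csInf (hSne.image n)
    rintro y ⟨f, hf, rfl⟩
    have h1 : (1 : ℝ) ≤ ‖f‖ := by
      have h := eval_le_norm f (toTree t₀)
      rw [hf.1 t₀ le_rfl] at h
      simpa using h
    calc c = c * 1 := by ring
    _ ≤ c * ‖f‖ := mul_le_mul_of_nonneg_left h1 hc.le
    _ ≤ n f := (hbd f).1
  -- near-minimizers at each node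
  have hfsel : ∀ σ : List Bool, ∃ f, Smem (Nd σ).1 f ∧ n f < k + (2⁻¹ : ℝ) ^ σ.length := by
    intro σ
    have hSne : ({f : C0Tree Υ | Smem (Nd σ).1 f}).Nonempty := hSind (Nd σ).1
    have hne : (n '' {f | Smem (Nd σ).1 f}).Nonempty := hSne.image n
    have hlt : sInf (n '' {f | Smem (Nd σ).1 f}) < k + (2⁻¹ : ℝ) ^ σ.length := by
      rw [hkmem _ (Nd σ).2]
      have hp : (0 : ℝ) < (2⁻¹ : ℝ) ^ σ.length := by positivity
      linarith
    obtain ⟨y, ⟨f, hf, rfl⟩, hy⟩ := exists_lt_of_csInf_lt hne hlt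
    exact ⟨f, hf, hy⟩
  choose fsel hfmem hflt using hfsel
  -- level averages
  let Y : ℕ → List Bool → C0Tree Υ := fun j =>
    Nat.rec fsel (fun _ ih σ => (2⁻¹ : ℝ) • (ih (true :: σ) + ih (false :: σ))) j
  have hY0 : ∀ σ, Y 0 σ = fsel σ := fun _ => rfl
  have hYsucc : ∀ j σ, Y (j + 1) σ = (2⁻¹ : ℝ) • (Y j (true :: σ) + Y j (false :: σ)) :=
    fun _ _ => rfl
  have hYmem : ∀ j σ, Smem (Nd σ).1 (Y j σ) := by
    intro j
    induction j with
    | zero => intro σ; exact hfmem σ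
    | succ j ih =>
      intro σ
      rw [hYsucc]
      exact Smem_mid (Smem_mono htree (hNle true σ) (ih (true :: σ)))
        (Smem_mono htree (hNle false σ) (ih (false :: σ)))
  have hnsmul2 : ∀ x : C0Tree Υ, n ((2⁻¹ : ℝ) • x) = 2⁻¹ * n x := by
    intro x
    have h : n ((2⁻¹ : ℝ) • x) = |(2⁻¹ : ℝ)| * n x := hhom 2⁻¹ x
    rw [h]
    norm_num
  have hYn : ∀ j σ, n (Y j σ) ≤ k + (2⁻¹ : ℝ) ^ (j + σ.length) := by
    intro j
    induction j with
    | zero =>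
      intro σ
      simpa [hY0] using (hflt σ).le
    | succ j ih =>
      intro σ
      rw [hYsucc, hnsmul2]
      have h1 := ih (true :: σ)
      have h2 := ih (false :: σ)
      have h3 := htri (Y j (true :: σ)) (Y j (false :: σ))
      have hlen : ∀ b : Bool, (b :: σ).length = σ.length + 1 := fun _ => rfl
      rw [hlen] at h1 h2
      have hexp : j + (σ.length + 1) = (j + 1) + σ.length := by omega
      rw [hexp] at h1 h2
      linarith
  -- uniform bound on the sup norms
  have hnormle : ∀ x : C0Tree Υ, ‖x‖ ≤ n x / c := by
    intro x
    rw [le_div_iff₀ hc]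
    have := (hbd x).1
    linarith
  have hYnorm : ∀ j σ, ‖Y j σ‖ ≤ (k + 1) / c := by
    intro j σ
    refine (hnormle _).trans ?_
    have h1 : n (Y j σ) ≤ k + 1 := by
      refine (hYn j σ).trans ?_
      have hle1 : (2⁻¹ : ℝ) ^ (j + σ.length) ≤ 1 := by
        apply pow_le_one₀ <;> norm_num
      linarith
    gcongr
  -- geometric control on consecutive differences
  have hYdiff : ∀ j σ, ‖Y (j + 1) σ - Y j σ‖ ≤ 2 * ((k + 1) / c) * (2⁻¹ : ℝ) ^ j := by
    intro j
    induction j with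
    | zero =>
      intro σ
      have h0 := norm_sub_le (Y 1 σ) (Y 0 σ)
      have h1 := hYnorm 1 σ
      have h2 := hYnorm 0 σ
      have : ‖Y 1 σ - Y 0 σ‖ ≤ 2 * ((k + 1) / c) := by linarith
      simpa using this
    | succ j ih =>
      intro σ
      have halg : Y (j + 1 + 1) σ - Y (j + 1) σ =
          (2⁻¹ : ℝ) • ((Y (j + 1) (true :: σ) - Y j (true :: σ)) +
            (Y (j + 1) (false :: σ) - Y j (false :: σ))) := by
        rw [hYsucc (j + 1) σ, hYsucc j σ]
        ext x
        simp
        ring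
      have hdisj : ∀ x : TreeSpace Υ,
          (Y (j + 1) (true :: σ) - Y j (true :: σ)) x = 0 ∨
          (Y (j + 1) (false :: σ) - Y j (false :: σ)) x = 0 := by
        intro x
        by_cases hcase : (Nd (true :: σ)).1 < (show Υ from x)
        · right
          have hnot : ¬ (Nd (false :: σ)).1 < (show Υ from x) := by
            intro h'
            rcases tree_comp htree hcase.le h'.le with hcc | hcc
            · exact (hsib (Nd σ)).1 hcc
            · exact (hsib (Nd σ)).2 hcc
          have heq := Smem_diff_eq (hYmem (j + 1) (false :: σ)) (hYmem j (false :: σ)) hnot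
          have hx : (Y (j + 1) (false :: σ) - Y j (false :: σ)) x =
              Y (j + 1) (false :: σ) x - Y j (false :: σ) x := by simp
          rw [hx]
          have : Y (j + 1) (false :: σ) x = Y j (false :: σ) x := heq
          rw [this]; ring
        · left
          have heq := Smem_diff_eq (hYmem (j + 1) (true :: σ)) (hYmem j (true :: σ)) hcase
          have hx : (Y (j + 1) (true :: σ) - Y j (true :: σ)) x =
              Y (j + 1) (true :: σ) x - Y j (true :: σ) x := by simp
          rw [hx]
          have : Y (j + 1) (true :: σ) x = Y j (true :: σ) x := heq
          rw [this]; ring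
      have hmax := norm_add_disjoint hdisj
      have h1 := ih (true :: σ)
      have h2 := ih (false :: σ)
      have hmax2 : max ‖Y (j + 1) (true :: σ) - Y j (true :: σ)‖
          ‖Y (j + 1) (false :: σ) - Y j (false :: σ)‖ ≤ 2 * ((k + 1) / c) * (2⁻¹ : ℝ) ^ j :=
        max_le h1 h2
      rw [halg]
      have h5 : ‖(Y (j + 1) (true :: σ) - Y j (true :: σ)) +
          (Y (j + 1) (false :: σ) - Y j (false :: σ))‖ ≤
          2 * ((k + 1) / c) * (2⁻¹ : ℝ) ^ j := le_trans hmax hmax2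
      refine (norm_half_smul_le _).trans ?_
      have h6 : (2⁻¹ : ℝ) * (2 * ((k + 1) / c) * (2⁻¹ : ℝ) ^ j) =
          2 * ((k + 1) / c) * (2⁻¹ : ℝ) ^ (j + 1) := by
        rw [pow_succ]; ring
      calc (2⁻¹ : ℝ) * ‖(Y (j + 1) (true :: σ) - Y j (true :: σ)) +
          (Y (j + 1) (false :: σ) - Y j (false :: σ))‖
          ≤ (2⁻¹ : ℝ) * (2 * ((k + 1) / c) * (2⁻¹ : ℝ) ^ j) :=
            mul_le_mul_of_nonneg_left h5 (by norm_num)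
        _ = 2 * ((k + 1) / c) * (2⁻¹ : ℝ) ^ (j + 1) := h6
  -- Cauchy sequences and their limits
  have hcauchy : ∀ σ, CauchySeq (fun j => Y j σ) := by
    intro σ
    apply cauchySeq_of_le_geometric (2⁻¹ : ℝ) (2 * ((k + 1) / c)) (by norm_num)
    intro j
    rw [dist_eq_norm, norm_sub_rev]
    exact hYdiff j σ
  obtain ⟨psiT, hpsiT⟩ := cauchySeq_tendsto_of_complete (hcauchy [true])
  obtain ⟨psiF, hpsiF⟩ := cauchySeq_tendsto_of_complete (hcauchy [false])
  have hpsiTmem : Smem (Nd [true]).1 psiT := Smem_closed (fun j => hYmem j [true]) hpsiT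
  have hpsiFmem : Smem (Nd [false]).1 psiF := Smem_closed (fun j => hYmem j [false]) hpsiF
  -- limit of the root averages is the midpoint
  have hmidten : Filter.Tendsto (fun j => Y (j + 1) [])
      Filter.atTop (𝓝 ((2⁻¹ : ℝ) • (psiT + psiF))) := by
    have hfun : (fun j => Y (j + 1) ([] : List Bool)) =
        fun j => (2⁻¹ : ℝ) • (Y j [true] + Y j [false]) := by
      funext j
      exact hYsucc j []
    rw [hfun]
    exact tendsto_half_add hpsiT hpsiF
  -- geometric limit
  have hgeo : Filter.Tendsto (fun j : ℕ => k + (2⁻¹ : ℝ) ^ (j + 1))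
      Filter.atTop (𝓝 k) := by
    have h0 : Filter.Tendsto (fun j : ℕ => (2⁻¹ : ℝ) ^ j) Filter.atTop (𝓝 0) :=
      tendsto_pow_atTop_nhds_zero_of_lt_one (by norm_num) (by norm_num)
    have h1 : Filter.Tendsto (fun j : ℕ => (2⁻¹ : ℝ) ^ (j + 1)) Filter.atTop (𝓝 0) := by
      have := h0.const_mul (2⁻¹ : ℝ)
      simp only [mul_zero] at this
      refine this.congr ?_
      intro j
      rw [pow_succ]
      ring
    have h2 : Filter.Tendsto (fun j : ℕ => k + (2⁻¹ : ℝ) ^ (j + 1)) Filter.atTop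
        (𝓝 (k + 0)) := Filter.Tendsto.add tendsto_const_nhds h1
    simpa using h2
  -- norm values of the limits
  have hnpsiT : n psiT = k := by
    have hup : n psiT ≤ k := by
      refine le_of_tendsto_of_tendsto' (hnten _ _ hpsiT) hgeo ?_
      intro j
      have := hYn j [true]
      simpa using this
    have hlo : k ≤ n psiT := hklb _ (Nd [true]).2 _ hpsiTmem
    linarith
  have hnpsiF : n psiF = k := by
    have hup : n psiF ≤ k := by
      refine le_of_tendsto_of_tendsto' (hnten _ _ hpsiF) hgeo ?_
      intro j
      have := hYn j [false]
      simpa using this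
    have hlo : k ≤ n psiF := hklb _ (Nd [false]).2 _ hpsiFmem
    linarith
  have hmidmem : Smem (Nd []).1 ((2⁻¹ : ℝ) • (psiT + psiF)) :=
    Smem_mid (Smem_mono htree (hNle true []) hpsiTmem)
      (Smem_mono htree (hNle false []) hpsiFmem)
  have hnmid : n ((2⁻¹ : ℝ) • (psiT + psiF)) = k := by
    have hup : n ((2⁻¹ : ℝ) • (psiT + psiF)) ≤ k := by
      refine le_of_tendsto_of_tendsto' (hnten _ _ hmidten) hgeo ?_
      intro j
      have := hYn (j + 1) []
      simpa using this
    have hlo : k ≤ n ((2⁻¹ : ℝ) • (psiT + psiF)) := hklb _ (Nd []).2 _ hmidmem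
    linarith
  -- strict convexity gives psiT = psiF
  have heq : psiT = psiF := by
    refine hsc psiT psiF (hnpsiT.trans hnpsiF.symm) ?_
    exact hnmid.trans hnpsiT.symm
  -- but they differ at the node Nd [true]
  have h1 : psiT (toTree (Nd [true]).1) = 1 := hpsiTmem.1 _ le_rfl
  have h0 : psiF (toTree (Nd [true]).1) = 0 := by
    apply hpsiFmem.2
    · exact (hsib (Nd [])).1
    · intro hlt
      exact (hsib (Nd [])).2 hlt.le
  rw [heq] at h1
  rw [h1] at h0
  exact one_ne_zero h0
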